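/- arXiv:2410.18735 — 2 statements merged into one kernel-verified Lean document; each statement's English description precedes it below -/
import Mathlib

section
/- Let (D, F) be a consistent classical-deterministic causal model, let s be a source vertex of D (i.e. Pa_D(s) = ∅), and fix any output value o_s ∈ O_s. Then the reduced causal model (D', F'), where D' is D with the vertex s and all edges incident to s removed, and where F' consists of ω_v for every v not a child of s and of the partial application ω_v(o_s, ·) for every child v of s, is again consistent. -/
set_option autoImplicit false

/-- A function `f` on a dependent product depends only on the coordinates in `S`:
its value is unchanged when the argument is modified outside of `S`. -/
def DependsOnlyOn {V : Type} {O : V → Type} {α : Type} (f : (∀ v, O v) → α) (S : Set V) : Prop :=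
  ∀ o o' : ∀ v, O v, (∀ v ∈ S, o v = o' v) → f o = f o'

/-- A function `f` on a dependent product depends nontrivially on the coordinate `ℓ`:
there are two arguments that differ only at `ℓ` and get assigned different values. -/
def DependsNontriviallyOn {V : Type} {O : V → Type} {α : Type} (f : (∀ v, O v) → α) (ℓ : V) : Prop :=
  ∃ o o' : ∀ v, O v, (∀ k, k ≠ ℓ → o k = o' k) ∧ f o ≠ f o'

/-- `c` is a directed cycle (of length `n`, with pairwise distinct vertices) in the
digraph with edge relation `E`. -/
def IsDirCycle {V : Type} (E : V → V → Prop) {n : ℕ} (c : ZMod n → V) : Prop :=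
  0 < n ∧ Function.Injective c ∧ ∀ i, E (c i) (c (i + 1))

/-- The directed cycle `c` has a chord: an edge `c i → c j` with `j ≠ i + 1 (mod n)`. -/
def HasChord {V : Type} (E : V → V → Prop) {n : ℕ} (c : ZMod n → V) : Prop :=
  ∃ i j : ZMod n, E (c i) (c j) ∧ j ≠ i + 1

/-- A digraph is a siblings-on-cycles graph if every directed cycle contains two
(distinct) vertices that share a common parent. -/
def SiblingsOnCycles {V : Type} (E : V → V → Prop) : Prop :=
  ∀ (n : ℕ) (c : ZMod n → V), IsDirCycle E c →
    ∃ i j : ZMod n, i ≠ j ∧ ∃ p, E p (c i) ∧ E p (c j)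

open Classical in
/-- The deterministic correlation `p(a|x) = [g(x) = a]` induced by a function `g`. -/
noncomputable def detCorr {V : Type} {X A : V → Type} (g : (∀ v, X v) → ∀ v, A v) :
    (∀ v, X v) → (∀ v, A v) → ℝ :=
  fun x a => if a = g x then 1 else 0

/-- A classical-deterministic causal model: a finite vertex set `V`, a digraph `E`
(the causal structure), finite nonempty output- and input-sets `O v`, `I v`, and the
model parameters `ω v : (∀ ℓ, O ℓ) → I v`.  (That `ω v` only depends on the
coordinates of the parents of `v` is expressed by `StructComp` below.) -/
structure CDModel where
  V : Type
  [fintV : Fintype V]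
  [decV : DecidableEq V]
  E : V → V → Prop
  O : V → Type
  I : V → Type
  [fintO : ∀ v, Fintype (O v)]
  [neO : ∀ v, Nonempty (O v)]
  [fintI : ∀ v, Fintype (I v)]
  [neI : ∀ v, Nonempty (I v)]
  ω : ∀ v, (∀ ℓ, O ℓ) → I v

attribute [instance] CDModel.fintV CDModel.decV CDModel.fintO CDModel.neO CDModel.fintI CDModel.neI

namespace CDModel

variable (M : CDModel)

/-- The parents of `v`. -/
def Pa (v : M.V) : Set M.V := {k | M.E k v}

/-- The children of `s`. -/
def Ch (s : M.V) : Set M.V := {v | M.E s v}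

/-- A source vertex: a vertex without parents. -/
def IsSource (s : M.V) : Prop := ∀ k, ¬ M.E k s

/-- The digraph `E` is a causal structure for the model parameters, i.e. each `ω v`
is a function of the outputs of the parents of `v` only. -/
def StructComp : Prop := ∀ v, DependsOnlyOn (M.ω v) (M.Pa v)

/-- Faithfulness: each `ω v` depends nontrivially on each of the parents of `v`. -/
def Faithful : Prop := ∀ ℓ v, M.E ℓ v → DependsNontriviallyOn (M.ω v) ℓ

open Classical in
/-- `g` witnesses the consistency condition for the interventions `μ`: for all
settings `x` and results `a`, the number of pairs `(i, o)` with `ω v o = i v` and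
`μ v (x v, i v) = (a v, o v)` (for all `v`) is `1` if `a = g x` and `0` otherwise. -/
def IsWitness (X A : M.V → Type) (μ : ∀ v, X v × M.I v → A v × M.O v)
    (g : (∀ v, X v) → ∀ v, A v) : Prop :=
  ∀ (x : ∀ v, X v) (a : ∀ v, A v),
    Nat.card {io : (∀ v, M.I v) × (∀ v, M.O v) //
      (∀ v, M.ω v io.2 = io.1 v) ∧ ∀ v, μ v (x v, io.1 v) = (a v, io.2 v)} =
    if a = g x then 1 else 0

/-- Consistency: every family of interventions admits a witnessing function `g`. -/
def Consistent : Prop :=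
  ∀ (X A : M.V → Type)
    (_ : ∀ v, Fintype (X v)) (_ : ∀ v, Nonempty (X v))
    (_ : ∀ v, Fintype (A v)) (_ : ∀ v, Nonempty (A v))
    (μ : ∀ v, X v × M.I v → A v × M.O v),
    ∃ g : (∀ v, X v) → ∀ v, A v, M.IsWitness X A μ g

/-- Extend an assignment of outputs on `V ∖ {s}` to all of `V` by putting `os` at `s`. -/
def extendAt (s : M.V) (os : M.O s) (o : ∀ v : {v : M.V // v ≠ s}, M.O v.1) (ℓ : M.V) :
    M.O ℓ :=
  if h : ℓ = s then cast (congrArg M.O h.symm) os else o ⟨ℓ, h⟩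

/-- The reduced causal model obtained by fixing the output `os` of the source `s`:
the vertex `s` and all its incident edges are removed, and each model parameter is
partially applied at the coordinate `s` (which keeps `ω v` unchanged for non-children
of `s`). -/
def reduce (s : M.V) (os : M.O s) : CDModel where
  V := {v : M.V // v ≠ s}
  E := fun a b => M.E a.1 b.1
  O := fun v => M.O v.1
  I := fun v => M.I v.1
  ω := fun v o => M.ω v.1 (M.extendAt s os o)

/-- The dependency graph of the model parameters: edge `ℓ → v` iff `ω v` depends
nontrivially on its `O ℓ`-coordinate. -/
def depGraph : M.V → M.V → Prop := fun ℓ v => DependsNontriviallyOn (M.ω v) ℓ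

/-- Replace the causal structure by the dependency graph of the model parameters. -/
def restrictDep : CDModel where
  V := M.V
  E := M.depGraph
  O := M.O
  I := M.I
  ω := M.ω

/-- One step of the flow: fix an output value of a source, pass to the reduced model,
and restrict its causal structure to the dependency graph of the reduced parameters. -/
def flowStep (s : M.V) (os : M.O s) : CDModel := (M.reduce s os).restrictDep

end CDModel

/-- Reachability of one causal model from another by a finite sequence of flow steps,
each fixing an output value of a source vertex of the current causal structure. -/
inductive Reaches : CDModel → CDModel → Prop where
  | refl (M : CDModel) : Reaches M M
  | tail {M N : CDModel} (s : M.V) (hs : M.IsSource s) (os : M.O s)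
      (h : Reaches (M.flowStep s os) N) : Reaches M N

/-- Causal correlations, defined recursively: a family of correlations on at most one
agent is causal; and a correlation is causal if it decomposes as a convex combination
over a first agent `v` of a local conditional distribution for `v` times correlations
for the remaining agents (depending on `v`'s setting and result) that are again causal. -/
inductive IsCausal : ∀ (S : Type) (X A : S → Type), ((∀ v, X v) → (∀ v, A v) → ℝ) → Prop where
  | base {S : Type} [Fintype S] {X A : S → Type}
      (p : (∀ v, X v) → (∀ v, A v) → ℝ) (h : Fintype.card S ≤ 1) : IsCausal S X A p
  | step {S : Type} [Fintype S] [DecidableEq S] {X A : S → Type} [∀ v, Fintype (A v)]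
      (p : (∀ v, X v) → (∀ v, A v) → ℝ)
      (q : S → ℝ) (hq0 : ∀ v, 0 ≤ q v) (hq1 : ∑ v, q v = 1)
      (pv : ∀ v : S, X v → A v → ℝ)
      (hpv0 : ∀ v x a, 0 ≤ pv v x a) (hpv1 : ∀ v x, ∑ a, pv v x a = 1)
      (pr : ∀ v : S, X v → A v →
        (∀ u : {u : S // u ≠ v}, X u.1) → (∀ u : {u : S // u ≠ v}, A u.1) → ℝ)
      (hpr : ∀ v xv av, IsCausal {u : S // u ≠ v} (fun u => X u.1) (fun u => A u.1) (pr v xv av))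
      (hdec : ∀ x a, p x a =
        ∑ v, q v * pv v (x v) (a v) * pr v (x v) (a v) (fun u => x u.1) (fun u => a u.1)) :
      IsCausal S X A p

/-- Convenience constructor for classical-deterministic causal models. -/
abbrev mkModel (V : Type) [Fintype V] [DecidableEq V] (E : V → V → Prop) (O I : V → Type)
    [∀ v, Fintype (O v)] [∀ v, Nonempty (O v)] [∀ v, Fintype (I v)] [∀ v, Nonempty (I v)]
    (ω : ∀ v, (∀ ℓ, O ℓ) → I v) : CDModel :=
  { V := V, E := E, O := O, I := I, ω := ω }


namespace Stmt0Aux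

variable (M : CDModel) (s : M.V)

/-- Lift a type family on `V ∖ {s}` to all of `V`, putting `PUnit` at `s`. -/
def liftT (T : {v : M.V // v ≠ s} → Type) : M.V → Type :=
  fun v => if h : v = s then PUnit else T ⟨v, h⟩

def liftTneg {T : {v : M.V // v ≠ s} → Type} {v : M.V} (h : v ≠ s) :
    liftT M s T v ≃ T ⟨v, h⟩ := Equiv.cast (dif_neg h)

def liftTpos {T : {v : M.V // v ≠ s} → Type} {v : M.V} (h : v = s) :
    liftT M s T v ≃ PUnit := Equiv.cast (dif_pos h)

lemma liftT_subsingleton {T : {v : M.V // v ≠ s} → Type} {v : M.V} (h : v = s) :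
    Subsingleton (liftT M s T v) := (liftTpos M s h).subsingleton

def liftFin {T : {v : M.V // v ≠ s} → Type} (hT : ∀ v, Fintype (T v)) :
    ∀ v, Fintype (liftT M s T v) := fun v => by
  unfold liftT; split
  · infer_instance
  · exact hT _

def liftNe {T : {v : M.V // v ≠ s} → Type} (hT : ∀ v, Nonempty (T v)) :
    ∀ v, Nonempty (liftT M s T v) := fun v => by
  unfold liftT; split
  · infer_instance
  · exact hT _

def liftμ (os : M.O s) {X' A' : {v : M.V // v ≠ s} → Type}
    (μ' : ∀ v : {v : M.V // v ≠ s}, X' v × M.I v.1 → A' v × M.O v.1) :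
    ∀ v, liftT M s X' v × M.I v → liftT M s A' v × M.O v :=
  fun v xi =>
    if h : v = s then
      ((liftTpos M s h).symm PUnit.unit, cast (congrArg M.O h.symm) os)
    else
      ((liftTneg M s h).symm (μ' ⟨v, h⟩ ((liftTneg M s h) xi.1, xi.2)).1,
        (μ' ⟨v, h⟩ ((liftTneg M s h) xi.1, xi.2)).2)

def liftx {T : {v : M.V // v ≠ s} → Type} (x' : ∀ v, T v) : ∀ v, liftT M s T v :=
  fun v => if h : v = s then (liftTpos M s h).symm PUnit.unit
           else (liftTneg M s h).symm (x' ⟨v, h⟩)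

lemma liftx_neg {T : {v : M.V // v ≠ s} → Type} (x' : ∀ v, T v) {v : M.V} (h : v ≠ s) :
    liftx M s x' v = (liftTneg M s h).symm (x' ⟨v, h⟩) := dif_neg h

def theEquiv (os : M.O s) {X' A' : {v : M.V // v ≠ s} → Type}
    (μ' : ∀ v : {v : M.V // v ≠ s}, X' v × M.I v.1 → A' v × M.O v.1)
    (x' : ∀ v, X' v) (a' : ∀ v, A' v) :
    {io : (∀ v, (M.reduce s os).I v) × (∀ v, (M.reduce s os).O v) //
        (∀ v, (M.reduce s os).ω v io.2 = io.1 v) ∧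
        ∀ v, μ' v (x' v, io.1 v) = (a' v, io.2 v)} ≃
    {io : (∀ v, M.I v) × (∀ v, M.O v) //
        (∀ v, M.ω v io.2 = io.1 v) ∧
        ∀ v, liftμ M s os μ' v (liftx M s x' v, io.1 v) = (liftx M s a' v, io.2 v)} where
  toFun := fun ⟨⟨i', o'⟩, h1, h2⟩ =>
    ⟨⟨fun v => if h : v = s then cast (congrArg M.I h.symm) (M.ω s (M.extendAt s os o'))
               else i' ⟨v, h⟩,
      M.extendAt s os o'⟩, by
      change (∀ v : {v : M.V // v ≠ s}, M.I v.1) at i'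
      change (∀ v : {v : M.V // v ≠ s}, M.O v.1) at o'
      constructor
      · intro v
        dsimp only
        by_cases h : v = s
        · rw [dif_pos h]
          subst h
          rw [cast_eq]
        · rw [dif_neg h]
          exact h1 ⟨v, h⟩
      · intro v
        dsimp only
        by_cases h : v = s
        · simp only [liftμ, liftx, CDModel.extendAt, dif_pos h]
        · simp only [liftμ, liftx, CDModel.extendAt, dif_neg h,
            Equiv.apply_symm_apply]
          rw [h2 ⟨v, h⟩]⟩
  invFun := fun ⟨⟨i, o⟩, h1, h2⟩ =>
    ⟨⟨fun v => i v.1, fun v => o v.1⟩, by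
      have hos : o s = cast (congrArg M.O (rfl : s = s).symm) os := by
        have h2s := congrArg Prod.snd (h2 s)
        simp only [liftμ, dif_pos (rfl : s = s)] at h2s
        exact h2s.symm
      have hext : M.extendAt s os (fun v : {v : M.V // v ≠ s} => o v.1) = o := by
        funext ℓ
        by_cases h : ℓ = s
        · rw [CDModel.extendAt, dif_pos h]
          subst h
          rw [hos]
        · rw [CDModel.extendAt, dif_neg h]
      constructor
      · intro v
        show M.ω v.1 (M.extendAt s os (fun v : {v : M.V // v ≠ s} => o v.1)) = i v.1
        rw [hext]
        exact h1 v.1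
      · intro v
        have h2v := h2 v.1
        simp only [liftμ, liftx, dif_neg v.2, Equiv.apply_symm_apply] at h2v
        have hfst := congrArg Prod.fst h2v
        have hsnd := congrArg Prod.snd h2v
        simp only at hfst hsnd
        have hfst' : (μ' ⟨v.1, v.2⟩ (x' ⟨v.1, v.2⟩, i v.1)).1 = a' ⟨v.1, v.2⟩ :=
          (liftTneg M s v.2).symm.injective hfst
        exact Prod.ext hfst' hsnd⟩
  left_inv := fun ⟨⟨i', o'⟩, h1, h2⟩ => by
    change (∀ v : {v : M.V // v ≠ s}, M.I v.1) at i'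
    change (∀ v : {v : M.V // v ≠ s}, M.O v.1) at o'
    apply Subtype.ext
    dsimp only
    apply Prod.ext
    · funext v
      obtain ⟨v, hv⟩ := v
      dsimp only
      exact dif_neg hv
    · funext v
      obtain ⟨v, hv⟩ := v
      show M.extendAt s os o' v = o' ⟨v, hv⟩
      rw [CDModel.extendAt, dif_neg hv]
  right_inv := fun ⟨⟨i, o⟩, h1, h2⟩ => by
    have hos : o s = cast (congrArg M.O (rfl : s = s).symm) os := by
      have h2s := congrArg Prod.snd (h2 s)
      simp only [liftμ, dif_pos (rfl : s = s)] at h2s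
      exact h2s.symm
    have hext : M.extendAt s os (fun v : {v : M.V // v ≠ s} => o v.1) = o := by
      funext ℓ
      by_cases h : ℓ = s
      · rw [CDModel.extendAt, dif_pos h]
        subst h
        rw [hos]
      · rw [CDModel.extendAt, dif_neg h]
    apply Subtype.ext
    dsimp only
    apply Prod.ext
    · funext v
      dsimp only
      by_cases h : v = s
      · have hωs : M.ω s (M.extendAt s os (fun v : {v : M.V // v ≠ s} => o v.1)) = i s := by
          rw [hext]
          exact h1 s
        rw [dif_pos h]
        subst h
        rw [cast_eq]
        exact hωs
      · rw [dif_neg h]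
    · exact hext

end Stmt0Aux

/-- **Reduction.**
If `(D, F)` is a consistent classical-deterministic causal model, `s` a source vertex
of `D`, and `o_s ∈ O_s` any output value, then the reduced causal model `(D', F')` is
again consistent. -/
theorem stmt0 (M : CDModel) (hstruct : M.StructComp) (hcons : M.Consistent)
    (s : M.V) (hs : M.IsSource s) (os : M.O s) :
    (M.reduce s os).Consistent := by
  classical
  intro X' A' finX' neX' finA' neA' μ'
  obtain ⟨g, hg⟩ := hcons (Stmt0Aux.liftT M s X') (Stmt0Aux.liftT M s A')
    (Stmt0Aux.liftFin M s finX') (Stmt0Aux.liftNe M s neX')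
    (Stmt0Aux.liftFin M s finA') (Stmt0Aux.liftNe M s neA')
    (Stmt0Aux.liftμ M s os μ')
  refine ⟨fun x' (v : {v : M.V // v ≠ s}) => (Stmt0Aux.liftTneg M s v.2) (g (Stmt0Aux.liftx M s x') v.1), ?_⟩
  intro x' a'
  have hiff : (Stmt0Aux.liftx M s a' = g (Stmt0Aux.liftx M s x')) ↔
      (a' = fun v : {v : M.V // v ≠ s} => (Stmt0Aux.liftTneg M s v.2) (g (Stmt0Aux.liftx M s x') v.1)) := by
    constructor
    · intro h
      funext v
      obtain ⟨v, hv⟩ := v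
      have := congrFun h v
      rw [Stmt0Aux.liftx_neg M s a' hv] at this
      exact (Equiv.symm_apply_eq _).mp this
    · intro h
      funext v
      by_cases hv : v = s
      · exact (Stmt0Aux.liftT_subsingleton M s hv).elim _ _
      · rw [Stmt0Aux.liftx_neg M s a' hv]
        have := congrFun h ⟨v, hv⟩
        rw [this]
        exact Equiv.symm_apply_apply _ _
  calc Nat.card _ = Nat.card _ := Nat.card_congr (Stmt0Aux.theEquiv M s os μ' x' a')
    _ = if Stmt0Aux.liftx M s a' = g (Stmt0Aux.liftx M s x') then 1 else 0 :=
        hg (Stmt0Aux.liftx M s x') (Stmt0Aux.liftx M s a')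
    _ = _ := by simp only [hiff]; congr
end

section
/- Let (D, F) be a consistent classical-deterministic causal model with |V| ≥ 2, let s be a source vertex of D, and fix interventions (μ_v)_{v∈V} and a setting x. Let o_s be the O_s-component and a_s the A_s-component of μ_s(x_s, c), where c is the constant value of ω_s. Then the correlation of (D, F) factorizes over s: for all a, p(a | x) = [a_s is the s-component of a] · p'(a restricted to V∖{s} | x restricted to V∖{s}), where p(a|x) = [g(x) = a] is the correlation of (D, F) under (μ_v) and p' is the correlation of the reduced model (D', F') at output o_s under the interventions (μ_v)_{v ≠ s}. -/
set_option autoImplicit false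

open Classical in
/-- **Factorization over a source.**
Let `(D, F)` be a consistent causal model with at least two agents, `s` a source, and
fix interventions `μ` and a setting `x`.  With `c` the constant value of `ω s`
(expressed as `M.ω s o₀` for an arbitrary `o₀`), let `o_s` and `a_s` be the `O s`- and
`A s`-components of `μ s (x s, c)`.  Then the correlation factorizes over `s`:
`p(a|x) = [a s = a_s] ⬝ p'(a∖s | x∖s)`, where `p` is the correlation of `(D, F)` under
`μ` and `p'` is the correlation of the reduced model at output `o_s` under the
interventions of the remaining agents. -/
theorem stmt6 (M : CDModel) (hstruct : M.StructComp) (hcons : M.Consistent)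
    (hcard : 2 ≤ Fintype.card M.V)
    (s : M.V) (hs : M.IsSource s)
    (X A : M.V → Type) [∀ v, Fintype (X v)] [∀ v, Nonempty (X v)]
    [∀ v, Fintype (A v)] [∀ v, Nonempty (A v)]
    (μ : ∀ v, X v × M.I v → A v × M.O v)
    (x : ∀ v, X v) (o₀ : ∀ v, M.O v)
    (g : (∀ v, X v) → ∀ v, A v) (hg : M.IsWitness X A μ g)
    (g' : (∀ v : {v : M.V // v ≠ s}, X v.1) → ∀ v : {v : M.V // v ≠ s}, A v.1)
    (hg' : (M.reduce s (μ s (x s, M.ω s o₀)).2).IsWitness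
      (fun v => X v.1) (fun v => A v.1) (fun v => μ v.1) g') :
    ∀ a : ∀ v, A v,
      detCorr g x a =
        (if a s = (μ s (x s, M.ω s o₀)).1 then (1 : ℝ) else 0) *
          detCorr g' (fun v => x v.1) (fun v => a v.1) := by
  classical
  intro a
  set c := M.ω s o₀ with hc
  -- ω s is constant since s is a source
  have hωconst : ∀ o : ∀ v, M.O v, M.ω s o = c := fun o =>
    hstruct s o o₀ (fun v hv => absurd hv (hs v))
  -- unique witness for (x, g x)
  have h1 : Nat.card {io : (∀ v, M.I v) × (∀ v, M.O v) //
      (∀ v, M.ω v io.2 = io.1 v) ∧ ∀ v, μ v (x v, io.1 v) = (g x v, io.2 v)} = 1 := by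
    rw [hg x (g x)]; simp
  obtain ⟨-, hne⟩ := Nat.card_eq_one_iff_unique.mp h1
  obtain ⟨⟨⟨i, o⟩, hω1, hμ1⟩⟩ := hne
  have his : i s = c := (hω1 s).symm.trans (hωconst o)
  have hμs : μ s (x s, c) = (g x s, o s) := by rw [← his]; exact hμ1 s
  have hos : (μ s (x s, c)).2 = o s := by rw [hμs]
  have has : (μ s (x s, c)).1 = g x s := by rw [hμs]
  -- extendAt with o s recovers o
  have hext : M.extendAt s (o s) (fun v : {v : M.V // v ≠ s} => o v.1) = o := by
    funext ℓ
    unfold CDModel.extendAt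
    split
    · next h => subst h; simp
    · rfl
  -- a witness element for the reduced model
  have hmem : Nonempty {io : (∀ v : {v : M.V // v ≠ s}, M.I v.1) ×
      (∀ v : {v : M.V // v ≠ s}, M.O v.1) //
      (∀ v, (M.reduce s (μ s (x s, c)).2).ω v io.2 = io.1 v) ∧
      ∀ v, μ v.1 (x v.1, io.1 v) = (g x v.1, io.2 v)} := by
    refine ⟨⟨(fun v => i v.1, fun v => o v.1), fun v => ?_, fun v => hμ1 v.1⟩⟩
    show M.ω v.1 (M.extendAt s (μ s (x s, c)).2 (fun u : {u : M.V // u ≠ s} => o u.1)) = i v.1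
    rw [hos, hext]; exact hω1 v.1
  have hg'eq : g' (fun v => x v.1) = fun v : {v : M.V // v ≠ s} => g x v.1 := by
    have hc2 := hg' (fun v => x v.1) (fun v : {v : M.V // v ≠ s} => g x v.1)
    by_contra hne2
    rw [if_neg (fun h => hne2 h.symm)] at hc2
    refine absurd hc2 (Nat.card_ne_zero.mpr ⟨?_, ?_⟩)
    · exact hmem
    · infer_instance
  simp only [detCorr]
  rw [has, hg'eq]
  by_cases h : a = g x
  · subst h; simp
  · rw [if_neg h]
    by_cases h1 : a s = g x s
    · have h2 : (fun v : {v : M.V // v ≠ s} => a v.1) ≠ fun v : {v : M.V // v ≠ s} => g x v.1 := by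
        intro heq
        apply h
        funext v
        by_cases hv : v = s
        · subst hv; exact h1
        · exact congrFun heq ⟨v, hv⟩
      rw [if_pos h1, if_neg h2]; ring
    · rw [if_neg h1]; ring
end
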